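/- For a syntactic guarantee formula ι (generated by the φ_G grammar rule), every state φ of the automaton D_ι other than the state true that belongs to a non-trivial SCC satisfies λ(φ) = ⊥. Dually, for a syntactic safety formula ι, every state other than false belonging to a non-trivial SCC satisfies λ(φ) = ⊤. -/
import Mathlib


/-- LTL formulas over atomic propositions `P`. -/
inductive LTL (P : Type) : Type
  | tt : LTL P
  | ff : LTL P
  | atom : P → LTL P
  | not : LTL P → LTL P
  | and : LTL P → LTL P → LTL P
  | or : LTL P → LTL P → LTL P
  | imp : LTL P → LTL P → LTL P
  | iff : LTL P → LTL P → LTL P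
  | xor : LTL P → LTL P → LTL P
  | next : LTL P → LTL P
  | until_ : LTL P → LTL P → LTL P
  | wuntil : LTL P → LTL P → LTL P
  | muntil : LTL P → LTL P → LTL P
  | release : LTL P → LTL P → LTL P
  | ev : LTL P → LTL P
  | always : LTL P → LTL P

namespace LTL

variable {P : Type}

/-- Negation with constant folding. -/
def mkNot : LTL P → LTL P
  | .tt => .ff
  | .ff => .tt
  | φ => .not φ

/-- Conjunction with constant folding. -/
def mkAnd : LTL P → LTL P → LTL P
  | .tt, β => β
  | .ff, _ => .ff
  | α, .tt => α
  | _, .ff => .ff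
  | α, β => .and α β

/-- Disjunction with constant folding. -/
def mkOr : LTL P → LTL P → LTL P
  | .tt, _ => .tt
  | .ff, β => β
  | _, .tt => .tt
  | α, .ff => α
  | α, β => .or α β

/-- Implication with constant folding. -/
def mkImp : LTL P → LTL P → LTL P
  | .ff, _ => .tt
  | .tt, β => β
  | _, .tt => .tt
  | α, .ff => mkNot α
  | α, β => .imp α β

/-- Equivalence with constant folding. -/
def mkIff : LTL P → LTL P → LTL P
  | .tt, β => β
  | .ff, β => mkNot β
  | α, .tt => α
  | α, .ff => mkNot α
  | α, β => .iff α β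

/-- Exclusive or with constant folding. -/
def mkXor : LTL P → LTL P → LTL P
  | .tt, β => mkNot β
  | .ff, β => β
  | α, .tt => mkNot α
  | α, .ff => α
  | α, β => .xor α β

/-- The syntactic successor (local unfolding) of a formula under an
assignment `v` of the atomic propositions. -/
def succ (v : P → Bool) : LTL P → LTL P
  | .tt => .tt
  | .ff => .ff
  | .atom p => if v p then .tt else .ff
  | .not φ => mkNot (succ v φ)
  | .and α β => mkAnd (succ v α) (succ v β)
  | .or α β => mkOr (succ v α) (succ v β)
  | .imp α β => mkImp (succ v α) (succ v β)
  | .iff α β => mkIff (succ v α) (succ v β)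
  | .xor α β => mkXor (succ v α) (succ v β)
  | .next φ => φ
  | .until_ α β => mkOr (succ v β) (mkAnd (succ v α) (.until_ α β))
  | .wuntil α β => mkOr (succ v β) (mkAnd (succ v α) (.wuntil α β))
  | .muntil α β => mkAnd (succ v β) (mkOr (succ v α) (.muntil α β))
  | .release α β => mkAnd (succ v β) (mkOr (succ v α) (.release α β))
  | .ev φ => mkOr (succ v φ) (.ev φ)
  | .always φ => mkAnd (succ v φ) (.always φ)

/-- Boolean evaluation of a formula where every maximal temporal subformula
(and every atomic proposition) is treated as an opaque Boolean variable,
interpreted by `ν`. -/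
def evalB (ν : LTL P → Prop) : LTL P → Prop
  | .tt => True
  | .ff => False
  | .not φ => ¬ evalB ν φ
  | .and α β => evalB ν α ∧ evalB ν β
  | .or α β => evalB ν α ∨ evalB ν β
  | .imp α β => evalB ν α → evalB ν β
  | .iff α β => evalB ν α ↔ evalB ν β
  | .xor α β => ¬ (evalB ν α ↔ evalB ν β)
  | φ => ν φ

/-- Propositional equivalence: the Boolean abstractions (with maximal
temporal subformulas replaced by variables) are logically equivalent. -/
def PropEquiv (α β : LTL P) : Prop := ∀ ν : LTL P → Prop, evalB ν α ↔ evalB ν β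

/-! Three-valued acceptance values `some true = ⊤`, `some false = ⊥`,
`none = *` (wildcard), with the wildcard-absorption tables of the paper. -/

def obNot : Option Bool → Option Bool
  | none => none
  | some b => some (!b)

def obAnd : Option Bool → Option Bool → Option Bool
  | some a, some b => some (a && b)
  | some a, none => some a
  | none, some b => some b
  | none, none => none

def obOr : Option Bool → Option Bool → Option Bool
  | some a, some b => some (a || b)
  | some a, none => some a
  | none, some b => some b
  | none, none => none

def obXor : Option Bool → Option Bool → Option Bool
  | some a, some b => some (a != b)
  | some _, none => some true
  | none, some _ => some true
  | none, none => none

def obIff : Option Bool → Option Bool → Option Bool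
  | some a, some b => some (a == b)
  | some _, none => some true
  | none, some _ => some true
  | none, none => none

def obImp : Option Bool → Option Bool → Option Bool
  | some a, some b => some (!a || b)
  | some true, none => some false
  | some false, none => some true
  | none, some b => some b
  | none, none => none

/-- The acceptance function λ : strong operators (F, U, M) are rejecting (⊥),
weak operators (G, W, R) are accepting (⊤), atoms are wildcards (*),
Boolean connectives are combined with wildcard absorption. -/
def lam : LTL P → Option Bool
  | .tt => some true
  | .ff => some false
  | .atom _ => none
  | .not φ => obNot (lam φ)
  | .and α β => obAnd (lam α) (lam β)
  | .or α β => obOr (lam α) (lam β)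
  | .imp α β => obImp (lam α) (lam β)
  | .iff α β => obIff (lam α) (lam β)
  | .xor α β => obXor (lam α) (lam β)
  | .next φ => lam φ
  | .until_ _ _ => some false
  | .muntil _ _ => some false
  | .ev _ => some false
  | .wuntil _ _ => some true
  | .release _ _ => some true
  | .always _ => some true

def IsConst : LTL P → Prop
  | .tt => True
  | .ff => True
  | _ => False

/-- `tt` and `ff` never occur as proper subformulas. -/
def NoConst : LTL P → Prop
  | .not φ => ¬ IsConst φ ∧ NoConst φ
  | .and α β => (¬ IsConst α ∧ NoConst α) ∧ (¬ IsConst β ∧ NoConst β)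
  | .or α β => (¬ IsConst α ∧ NoConst α) ∧ (¬ IsConst β ∧ NoConst β)
  | .imp α β => (¬ IsConst α ∧ NoConst α) ∧ (¬ IsConst β ∧ NoConst β)
  | .iff α β => (¬ IsConst α ∧ NoConst α) ∧ (¬ IsConst β ∧ NoConst β)
  | .xor α β => (¬ IsConst α ∧ NoConst α) ∧ (¬ IsConst β ∧ NoConst β)
  | .next φ => ¬ IsConst φ ∧ NoConst φ
  | .until_ α β => (¬ IsConst α ∧ NoConst α) ∧ (¬ IsConst β ∧ NoConst β)
  | .wuntil α β => (¬ IsConst α ∧ NoConst α) ∧ (¬ IsConst β ∧ NoConst β)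
  | .muntil α β => (¬ IsConst α ∧ NoConst α) ∧ (¬ IsConst β ∧ NoConst β)
  | .release α β => (¬ IsConst α ∧ NoConst α) ∧ (¬ IsConst β ∧ NoConst β)
  | .ev φ => ¬ IsConst φ ∧ NoConst φ
  | .always φ => ¬ IsConst φ ∧ NoConst φ
  | _ => True

/-- The "bottom" class `φ_B`: Boolean combinations of atomic propositions,
constants, possibly with `X`. -/
inductive IsB : LTL P → Prop
  | tt : IsB .tt
  | ff : IsB .ff
  | atom (p : P) : IsB (.atom p)
  | not {φ} : IsB φ → IsB (.not φ)
  | and {α β} : IsB α → IsB β → IsB (.and α β)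
  | or {α β} : IsB α → IsB β → IsB (.or α β)
  | imp {α β} : IsB α → IsB β → IsB (.imp α β)
  | iff {α β} : IsB α → IsB β → IsB (.iff α β)
  | xor {α β} : IsB α → IsB β → IsB (.xor α β)
  | next {φ} : IsB φ → IsB (.next φ)

mutual
/-- Syntactic guarantee formulas `φ_G`. -/
inductive IsG : LTL P → Prop
  | ofB {φ} : IsB φ → IsG φ
  | notS {φ} : IsS φ → IsG (.not φ)
  | and {α β} : IsG α → IsG β → IsG (.and α β)
  | or {α β} : IsG α → IsG β → IsG (.or α β)
  | impS {α β} : IsS α → IsG β → IsG (.imp α β)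
  | next {φ} : IsG φ → IsG (.next φ)
  | ev {φ} : IsG φ → IsG (.ev φ)
  | until_ {α β} : IsG α → IsG β → IsG (.until_ α β)
  | muntil {α β} : IsG α → IsG β → IsG (.muntil α β)

/-- Syntactic safety formulas `φ_S`. -/
inductive IsS : LTL P → Prop
  | ofB {φ} : IsB φ → IsS φ
  | notG {φ} : IsG φ → IsS (.not φ)
  | and {α β} : IsS α → IsS β → IsS (.and α β)
  | or {α β} : IsS α → IsS β → IsS (.or α β)
  | impG {α β} : IsG α → IsS β → IsS (.imp α β)
  | next {φ} : IsS φ → IsS (.next φ)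
  | always {φ} : IsS φ → IsS (.always φ)
  | release {α β} : IsS α → IsS β → IsS (.release α β)
  | wuntil {α β} : IsS α → IsS β → IsS (.wuntil α β)
end

/-- Syntactic obligation formulas `φ_O`. -/
inductive IsO : LTL P → Prop
  | ofG {φ} : IsG φ → IsO φ
  | ofS {φ} : IsS φ → IsO φ
  | not {φ} : IsO φ → IsO (.not φ)
  | and {α β} : IsO α → IsO β → IsO (.and α β)
  | or {α β} : IsO α → IsO β → IsO (.or α β)
  | imp {α β} : IsO α → IsO β → IsO (.imp α β)
  | iff {α β} : IsO α → IsO β → IsO (.iff α β)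
  | xor {α β} : IsO α → IsO β → IsO (.xor α β)
  | next {φ} : IsO φ → IsO (.next φ)
  | untilG {α β} : IsO α → IsG β → IsO (.until_ α β)
  | releaseS {α β} : IsO α → IsS β → IsO (.release α β)
  | wuntilO {α β} : IsS α → IsO β → IsO (.wuntil α β)
  | muntilO {α β} : IsG α → IsO β → IsO (.muntil α β)

/-- Raw successor relation (no quotienting). -/
def StepRaw (α β : LTL P) : Prop := ∃ v : P → Bool, succ v α = β

/-- Successor relation of the construction: the raw successor is replaced by
the representative `rep` of its propositional-equivalence class. -/
def StepRep (rep : LTL P → LTL P) (α β : LTL P) : Prop :=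
  ∃ v : P → Bool, rep (succ v α) = β

/-- Hypotheses making `rep` a legitimate choice of representatives of
propositional-equivalence classes for the automaton `D_ι`: `rep` picks a
propositionally equivalent formula, constantly on each class, the constants
are canonical, and every state of `D_ι` is (except for `ι` and the constants)
a formula actually produced by the unfolding `succ` from `ι`. -/
def GoodRep (rep : LTL P → LTL P) (ι : LTL P) : Prop :=
  (∀ α, PropEquiv (rep α) α) ∧
  (∀ α β, PropEquiv α β → rep α = rep β) ∧
  (rep .tt = .tt) ∧ (rep .ff = .ff) ∧
  (∀ φ, Relation.ReflTransGen (StepRep rep) ι φ →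
      φ = ι ∨ φ = .tt ∨ φ = .ff ∨ Relation.ReflTransGen StepRaw ι φ)

/-- Shift of an infinite word. -/
def shiftw (w : ℕ → (P → Prop)) (k : ℕ) : ℕ → (P → Prop) := fun n => w (n + k)

/-- Standard LTL semantics over infinite words. -/
def Sat : (ℕ → (P → Prop)) → LTL P → Prop
  | _, .tt => True
  | _, .ff => False
  | w, .atom p => w 0 p
  | w, .not φ => ¬ Sat w φ
  | w, .and α β => Sat w α ∧ Sat w β
  | w, .or α β => Sat w α ∨ Sat w β
  | w, .imp α β => Sat w α → Sat w β
  | w, .iff α β => Sat w α ↔ Sat w β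
  | w, .xor α β => ¬ (Sat w α ↔ Sat w β)
  | w, .next φ => Sat (shiftw w 1) φ
  | w, .until_ α β => ∃ i, Sat (shiftw w i) β ∧ ∀ j < i, Sat (shiftw w j) α
  | w, .wuntil α β =>
      (∃ i, Sat (shiftw w i) β ∧ ∀ j < i, Sat (shiftw w j) α) ∨ ∀ i, Sat (shiftw w i) α
  | w, .muntil α β =>
      ∃ i, (Sat (shiftw w i) α ∧ Sat (shiftw w i) β) ∧ ∀ j < i, Sat (shiftw w j) β
  | w, .release α β => ∀ i, Sat (shiftw w i) β ∨ ∃ j < i, Sat (shiftw w j) α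
  | w, .ev φ => ∃ i, Sat (shiftw w i) φ
  | w, .always φ => ∀ i, Sat (shiftw w i) φ

/-- X-nesting depth. -/
def xdepth : LTL P → ℕ
  | .not φ => xdepth φ
  | .and α β => max (xdepth α) (xdepth β)
  | .or α β => max (xdepth α) (xdepth β)
  | .imp α β => max (xdepth α) (xdepth β)
  | .iff α β => max (xdepth α) (xdepth β)
  | .xor α β => max (xdepth α) (xdepth β)
  | .next φ => xdepth φ + 1
  | _ => 0

/-- Size of a formula. -/
def size : LTL P → ℕ
  | .tt => 1
  | .ff => 1
  | .atom _ => 1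
  | .not φ => size φ + 1
  | .and α β => size α + size β + 1
  | .or α β => size α + size β + 1
  | .imp α β => size α + size β + 1
  | .iff α β => size α + size β + 1
  | .xor α β => size α + size β + 1
  | .next φ => size φ + 1
  | .until_ α β => size α + size β + 1
  | .wuntil α β => size α + size β + 1
  | .muntil α β => size α + size β + 1
  | .release α β => size α + size β + 1
  | .ev φ => size φ + 1
  | .always φ => size φ + 1

/-- Iterated application of the syntactic successor. -/
def iterSucc (vs : ℕ → P → Bool) (φ : LTL P) : ℕ → LTL P
  | 0 => φ
  | n + 1 => succ (vs n) (iterSucc vs φ n)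

/-- The run of the automaton `D_ι` (with representative function `rep`) on
the infinite word `w`. -/
def runRep (rep : LTL P → LTL P) (ι : LTL P) (w : ℕ → P → Bool) : ℕ → LTL P
  | 0 => ι
  | n + 1 => rep (succ (w n) (runRep rep ι w n))

end LTL
namespace LTL

variable {P : Type}

/-! ### Basic facts -/

lemma isConst_iff {φ : LTL P} : IsConst φ ↔ φ = .tt ∨ φ = .ff := by
  cases φ <;> simp [IsConst]

lemma succ_of_const {v : P → Bool} {φ : LTL P} (h : IsConst φ) : succ v φ = φ := by
  rcases isConst_iff.mp h with h | h <;> subst h <;> rfl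

/-! ### Case analysis for the smart constructors -/

lemma mkNot_cases (a : LTL P) :
    mkNot a = .tt ∨ mkNot a = .ff ∨ (¬ IsConst a ∧ mkNot a = .not a) := by
  cases a <;> simp [mkNot, IsConst]

lemma mkAnd_cases (a b : LTL P) :
    mkAnd a b = .ff ∨ mkAnd a b = a ∨ mkAnd a b = b ∨
      (¬ IsConst a ∧ ¬ IsConst b ∧ mkAnd a b = .and a b) := by
  cases a <;> cases b <;> simp [mkAnd, IsConst]

lemma mkOr_cases (a b : LTL P) :
    mkOr a b = .tt ∨ mkOr a b = a ∨ mkOr a b = b ∨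
      (¬ IsConst a ∧ ¬ IsConst b ∧ mkOr a b = .or a b) := by
  cases a <;> cases b <;> simp [mkOr, IsConst]

lemma mkImp_cases (a b : LTL P) :
    mkImp a b = .tt ∨ mkImp a b = b ∨ (¬ IsConst a ∧ mkImp a b = .not a) ∨
      (¬ IsConst a ∧ ¬ IsConst b ∧ mkImp a b = .imp a b) := by
  cases a <;> cases b <;> simp [mkImp, mkNot, IsConst]

lemma mkIff_cases (a b : LTL P) :
    mkIff a b = .tt ∨ mkIff a b = .ff ∨ mkIff a b = a ∨ mkIff a b = b ∨
      (¬ IsConst a ∧ mkIff a b = .not a) ∨ (¬ IsConst b ∧ mkIff a b = .not b) ∨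
      (¬ IsConst a ∧ ¬ IsConst b ∧ mkIff a b = .iff a b) := by
  cases a <;> cases b <;> simp [mkIff, mkNot, IsConst]

lemma mkXor_cases (a b : LTL P) :
    mkXor a b = .tt ∨ mkXor a b = .ff ∨ mkXor a b = a ∨ mkXor a b = b ∨
      (¬ IsConst a ∧ mkXor a b = .not a) ∨ (¬ IsConst b ∧ mkXor a b = .not b) ∨
      (¬ IsConst a ∧ ¬ IsConst b ∧ mkXor a b = .xor a b) := by
  cases a <;> cases b <;> simp [mkXor, mkNot, IsConst]

end LTL
namespace LTL
variable {P : Type}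

/-! ### `evalB` and the smart constructors -/

lemma evalB_mkNot (ν : LTL P → Prop) (a : LTL P) :
    evalB ν (mkNot a) ↔ ¬ evalB ν a := by
  cases a <;> simp [mkNot, evalB]

lemma evalB_mkAnd (ν : LTL P → Prop) (a b : LTL P) :
    evalB ν (mkAnd a b) ↔ (evalB ν a ∧ evalB ν b) := by
  cases a <;> cases b <;> simp [mkAnd, evalB]

lemma evalB_mkOr (ν : LTL P → Prop) (a b : LTL P) :
    evalB ν (mkOr a b) ↔ (evalB ν a ∨ evalB ν b) := by
  cases a <;> cases b <;> simp [mkOr, evalB]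

lemma evalB_mkImp (ν : LTL P → Prop) (a b : LTL P) :
    evalB ν (mkImp a b) ↔ (evalB ν a → evalB ν b) := by
  cases a <;> cases b <;> simp [mkImp, mkNot, evalB]

lemma evalB_mkIff (ν : LTL P → Prop) (a b : LTL P) :
    evalB ν (mkIff a b) ↔ (evalB ν a ↔ evalB ν b) := by
  cases a <;> cases b <;> simp [mkIff, mkNot, evalB]

lemma evalB_mkXor (ν : LTL P → Prop) (a b : LTL P) :
    evalB ν (mkXor a b) ↔ ¬ (evalB ν a ↔ evalB ν b) := by
  cases a <;> cases b <;> simp [mkXor, mkNot, evalB] <;> tauto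

lemma evalB_succ (ν : LTL P → Prop) (v : P → Bool) :
    ∀ φ : LTL P, evalB ν (succ v φ) ↔ evalB (fun χ => evalB ν (succ v χ)) φ := by
  intro φ
  induction φ with
  | tt => exact Iff.rfl
  | ff => exact Iff.rfl
  | atom p => exact Iff.rfl
  | not φ ih => simp only [succ, evalB, evalB_mkNot, ih]
  | and α β ihα ihβ => simp only [succ, evalB, evalB_mkAnd, ihα, ihβ]
  | or α β ihα ihβ => simp only [succ, evalB, evalB_mkOr, ihα, ihβ]
  | imp α β ihα ihβ => simp only [succ, evalB, evalB_mkImp, ihα, ihβ]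
  | iff α β ihα ihβ => simp only [succ, evalB, evalB_mkIff, ihα, ihβ]
  | xor α β ihα ihβ => simp only [succ, evalB, evalB_mkXor, ihα, ihβ]
  | next φ ih => exact Iff.rfl
  | until_ α β ihα ihβ => exact Iff.rfl
  | wuntil α β ihα ihβ => exact Iff.rfl
  | muntil α β ihα ihβ => exact Iff.rfl
  | release α β ihα ihβ => exact Iff.rfl
  | ev φ ih => exact Iff.rfl
  | always φ ih => exact Iff.rfl

lemma PropEquiv.refl (α : LTL P) : PropEquiv α α := fun _ => Iff.rfl
lemma PropEquiv.symm' {α β : LTL P} (h : PropEquiv α β) : PropEquiv β α := fun ν => (h ν).symm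
lemma PropEquiv.trans' {α β γ : LTL P} (h : PropEquiv α β) (h' : PropEquiv β γ) :
    PropEquiv α γ := fun ν => (h ν).trans (h' ν)

lemma PropEquiv.succ_congr {α β : LTL P} (h : PropEquiv α β) (v : P → Bool) :
    PropEquiv (succ v α) (succ v β) := fun ν =>
  (evalB_succ ν v α).trans ((h _).trans (evalB_succ ν v β).symm)

end LTL
namespace LTL
variable {P : Type}

/-! ### Preservation of `IsB` -/

lemma IsB.tt' : IsB (.tt : LTL P) := IsB.tt
lemma IsB.ff' : IsB (.ff : LTL P) := IsB.ff

lemma IsB.mkNot {a : LTL P} (ha : IsB a) : IsB (mkNot a) := by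
  rcases mkNot_cases a with h | h | ⟨_, h⟩ <;> rw [h]
  · exact IsB.tt
  · exact IsB.ff
  · exact IsB.not ha

lemma IsB.mkAnd {a b : LTL P} (ha : IsB a) (hb : IsB b) : IsB (mkAnd a b) := by
  rcases mkAnd_cases a b with h | h | h | ⟨_, _, h⟩ <;> rw [h]
  · exact IsB.ff
  · exact ha
  · exact hb
  · exact IsB.and ha hb

lemma IsB.mkOr {a b : LTL P} (ha : IsB a) (hb : IsB b) : IsB (mkOr a b) := by
  rcases mkOr_cases a b with h | h | h | ⟨_, _, h⟩ <;> rw [h]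
  · exact IsB.tt
  · exact ha
  · exact hb
  · exact IsB.or ha hb

lemma IsB.mkImp {a b : LTL P} (ha : IsB a) (hb : IsB b) : IsB (mkImp a b) := by
  rcases mkImp_cases a b with h | h | ⟨_, h⟩ | ⟨_, _, h⟩ <;> rw [h]
  · exact IsB.tt
  · exact hb
  · exact IsB.not ha
  · exact IsB.imp ha hb

lemma IsB.mkIff {a b : LTL P} (ha : IsB a) (hb : IsB b) : IsB (mkIff a b) := by
  rcases mkIff_cases a b with h | h | h | h | ⟨_, h⟩ | ⟨_, h⟩ | ⟨_, _, h⟩ <;> rw [h]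
  · exact IsB.tt
  · exact IsB.ff
  · exact ha
  · exact hb
  · exact IsB.not ha
  · exact IsB.not hb
  · exact IsB.iff ha hb

lemma IsB.mkXor {a b : LTL P} (ha : IsB a) (hb : IsB b) : IsB (mkXor a b) := by
  rcases mkXor_cases a b with h | h | h | h | ⟨_, h⟩ | ⟨_, h⟩ | ⟨_, _, h⟩ <;> rw [h]
  · exact IsB.tt
  · exact IsB.ff
  · exact ha
  · exact hb
  · exact IsB.not ha
  · exact IsB.not hb
  · exact IsB.xor ha hb

lemma IsB.succ {v : P → Bool} {φ : LTL P} (h : IsB φ) : IsB (succ v φ) := by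
  induction h with
  | tt => exact IsB.tt
  | ff => exact IsB.ff
  | atom p =>
    by_cases h : v p <;> simp [LTL.succ, h]
    · exact IsB.tt
    · exact IsB.ff
  | not _ ih => exact IsB.mkNot ih
  | and _ _ iha ihb => exact IsB.mkAnd iha ihb
  | or _ _ iha ihb => exact IsB.mkOr iha ihb
  | imp _ _ iha ihb => exact IsB.mkImp iha ihb
  | iff _ _ iha ihb => exact IsB.mkIff iha ihb
  | xor _ _ iha ihb => exact IsB.mkXor iha ihb
  | next hφ ih => exact hφ

/-! ### Depth decrease for `IsB` formulas -/

lemma xdepth_lt_and {a b α β : LTL P}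
    (ha : IsConst a ∨ xdepth a < xdepth α) (hb : IsConst b ∨ xdepth b < xdepth β)
    (hca : ¬ IsConst a) (hcb : ¬ IsConst b) :
    max (xdepth a) (xdepth b) < max (xdepth α) (xdepth β) := by
  rcases ha with h | h; · exact absurd h hca
  rcases hb with h' | h'; · exact absurd h' hcb
  exact max_lt (h.trans_le (le_max_left _ _)) (h'.trans_le (le_max_right _ _))

lemma succ_depth (v : P → Bool) {φ : LTL P} (h : IsB φ) :
    IsConst (succ v φ) ∨ xdepth (succ v φ) < xdepth φ := by
  induction h with
  | tt => exact Or.inl trivial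
  | ff => exact Or.inl trivial
  | atom p => by_cases h : v p <;> simp [LTL.succ, h, IsConst]
  | not hφ ih =>
    show IsConst (mkNot _) ∨ xdepth (mkNot _) < _
    rcases mkNot_cases (succ v _) with h | h | ⟨hc, h⟩ <;> rw [h]
    · exact Or.inl trivial
    · exact Or.inl trivial
    · rcases ih with h' | h'
      · exact absurd h' hc
      · exact Or.inr h'
  | and hα hβ iha ihb =>
    show IsConst (mkAnd _ _) ∨ xdepth (mkAnd _ _) < _
    rcases mkAnd_cases (succ v _) (succ v _) with h | h | h | ⟨hca, hcb, h⟩ <;> rw [h]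
    · exact Or.inl trivial
    · rcases iha with h' | h'
      · exact Or.inl h'
      · exact Or.inr (h'.trans_le (le_max_left _ _))
    · rcases ihb with h' | h'
      · exact Or.inl h'
      · exact Or.inr (h'.trans_le (le_max_right _ _))
    · exact Or.inr (xdepth_lt_and iha ihb hca hcb)
  | or hα hβ iha ihb =>
    show IsConst (mkOr _ _) ∨ xdepth (mkOr _ _) < _
    rcases mkOr_cases (succ v _) (succ v _) with h | h | h | ⟨hca, hcb, h⟩ <;> rw [h]
    · exact Or.inl trivial
    · rcases iha with h' | h'
      · exact Or.inl h'
      · exact Or.inr (h'.trans_le (le_max_left _ _))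
    · rcases ihb with h' | h'
      · exact Or.inl h'
      · exact Or.inr (h'.trans_le (le_max_right _ _))
    · exact Or.inr (xdepth_lt_and iha ihb hca hcb)
  | imp hα hβ iha ihb =>
    show IsConst (mkImp _ _) ∨ xdepth (mkImp _ _) < _
    rcases mkImp_cases (succ v _) (succ v _) with h | h | ⟨hca, h⟩ | ⟨hca, hcb, h⟩ <;> rw [h]
    · exact Or.inl trivial
    · rcases ihb with h' | h'
      · exact Or.inl h'
      · exact Or.inr (h'.trans_le (le_max_right _ _))
    · rcases iha with h' | h'
      · exact absurd h' hca
      · exact Or.inr (h'.trans_le (le_max_left _ _))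
    · exact Or.inr (xdepth_lt_and iha ihb hca hcb)
  | iff hα hβ iha ihb =>
    show IsConst (mkIff _ _) ∨ xdepth (mkIff _ _) < _
    rcases mkIff_cases (succ v _) (succ v _) with h | h | h | h | ⟨hca, h⟩ | ⟨hcb, h⟩ |
      ⟨hca, hcb, h⟩ <;> rw [h]
    · exact Or.inl trivial
    · exact Or.inl trivial
    · rcases iha with h' | h'
      · exact Or.inl h'
      · exact Or.inr (h'.trans_le (le_max_left _ _))
    · rcases ihb with h' | h'
      · exact Or.inl h'
      · exact Or.inr (h'.trans_le (le_max_right _ _))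
    · rcases iha with h' | h'
      · exact absurd h' hca
      · exact Or.inr (h'.trans_le (le_max_left _ _))
    · rcases ihb with h' | h'
      · exact absurd h' hcb
      · exact Or.inr (h'.trans_le (le_max_right _ _))
    · exact Or.inr (xdepth_lt_and iha ihb hca hcb)
  | xor hα hβ iha ihb =>
    show IsConst (mkXor _ _) ∨ xdepth (mkXor _ _) < _
    rcases mkXor_cases (succ v _) (succ v _) with h | h | h | h | ⟨hca, h⟩ | ⟨hcb, h⟩ |
      ⟨hca, hcb, h⟩ <;> rw [h]
    · exact Or.inl trivial
    · exact Or.inl trivial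
    · rcases iha with h' | h'
      · exact Or.inl h'
      · exact Or.inr (h'.trans_le (le_max_left _ _))
    · rcases ihb with h' | h'
      · exact Or.inl h'
      · exact Or.inr (h'.trans_le (le_max_right _ _))
    · rcases iha with h' | h'
      · exact absurd h' hca
      · exact Or.inr (h'.trans_le (le_max_left _ _))
    · rcases ihb with h' | h'
      · exact absurd h' hcb
      · exact Or.inr (h'.trans_le (le_max_right _ _))
    · exact Or.inr (xdepth_lt_and iha ihb hca hcb)
  | next hφ ih =>
    exact Or.inr (by simp [LTL.succ, xdepth])

end LTL
namespace LTL
variable {P : Type}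

/-! ### Preservation of the guarantee/safety grammars under `succ` -/

lemma IsG.mkAnd {a b : LTL P} (ha : IsG a) (hb : IsG b) : IsG (mkAnd a b) := by
  rcases mkAnd_cases a b with h | h | h | ⟨_, _, h⟩ <;> rw [h]
  exacts [IsG.ofB IsB.ff, ha, hb, IsG.and ha hb]

lemma IsG.mkOr {a b : LTL P} (ha : IsG a) (hb : IsG b) : IsG (mkOr a b) := by
  rcases mkOr_cases a b with h | h | h | ⟨_, _, h⟩ <;> rw [h]
  exacts [IsG.ofB IsB.tt, ha, hb, IsG.or ha hb]

lemma IsG.mkImp {a b : LTL P} (ha : IsS a) (hb : IsG b) : IsG (mkImp a b) := by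
  rcases mkImp_cases a b with h | h | ⟨_, h⟩ | ⟨_, _, h⟩ <;> rw [h]
  exacts [IsG.ofB IsB.tt, hb, IsG.notS ha, IsG.impS ha hb]

lemma IsS.mkAnd {a b : LTL P} (ha : IsS a) (hb : IsS b) : IsS (mkAnd a b) := by
  rcases mkAnd_cases a b with h | h | h | ⟨_, _, h⟩ <;> rw [h]
  exacts [IsS.ofB IsB.ff, ha, hb, IsS.and ha hb]

lemma IsS.mkOr {a b : LTL P} (ha : IsS a) (hb : IsS b) : IsS (mkOr a b) := by
  rcases mkOr_cases a b with h | h | h | ⟨_, _, h⟩ <;> rw [h]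
  exacts [IsS.ofB IsB.tt, ha, hb, IsS.or ha hb]

lemma IsS.mkImp {a b : LTL P} (ha : IsG a) (hb : IsS b) : IsS (mkImp a b) := by
  rcases mkImp_cases a b with h | h | ⟨_, h⟩ | ⟨_, _, h⟩ <;> rw [h]
  exacts [IsS.ofB IsB.tt, hb, IsS.notG ha, IsS.impG ha hb]

lemma succ_GS (v : P → Bool) :
    ∀ φ : LTL P, (IsG φ → IsG (succ v φ)) ∧ (IsS φ → IsS (succ v φ)) := by
  intro φ
  induction φ with
  | tt => exact ⟨fun h => h, fun h => h⟩
  | ff => exact ⟨fun h => h, fun h => h⟩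
  | atom p =>
    constructor <;> intro _ <;> by_cases h : v p <;> simp [LTL.succ, h]
    exacts [IsG.ofB IsB.tt, IsG.ofB IsB.ff, IsS.ofB IsB.tt, IsS.ofB IsB.ff]
  | not φ ih =>
    constructor <;> intro h
    · cases h with
      | ofB hB => exact IsG.ofB hB.succ
      | notS hS =>
        show IsG (mkNot _)
        rcases mkNot_cases (succ v φ) with h | h | ⟨_, h⟩ <;> rw [h]
        exacts [IsG.ofB IsB.tt, IsG.ofB IsB.ff, IsG.notS (ih.2 hS)]
    · cases h with
      | ofB hB => exact IsS.ofB hB.succ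
      | notG hG =>
        show IsS (mkNot _)
        rcases mkNot_cases (succ v φ) with h | h | ⟨_, h⟩ <;> rw [h]
        exacts [IsS.ofB IsB.tt, IsS.ofB IsB.ff, IsS.notG (ih.1 hG)]
  | and α β ihα ihβ =>
    constructor <;> intro h
    · cases h with
      | ofB hB => exact IsG.ofB hB.succ
      | and hα hβ => exact IsG.mkAnd (ihα.1 hα) (ihβ.1 hβ)
    · cases h with
      | ofB hB => exact IsS.ofB hB.succ
      | and hα hβ => exact IsS.mkAnd (ihα.2 hα) (ihβ.2 hβ)
  | or α β ihα ihβ =>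
    constructor <;> intro h
    · cases h with
      | ofB hB => exact IsG.ofB hB.succ
      | or hα hβ => exact IsG.mkOr (ihα.1 hα) (ihβ.1 hβ)
    · cases h with
      | ofB hB => exact IsS.ofB hB.succ
      | or hα hβ => exact IsS.mkOr (ihα.2 hα) (ihβ.2 hβ)
  | imp α β ihα ihβ =>
    constructor <;> intro h
    · cases h with
      | ofB hB => exact IsG.ofB hB.succ
      | impS hα hβ => exact IsG.mkImp (ihα.2 hα) (ihβ.1 hβ)
    · cases h with
      | ofB hB => exact IsS.ofB hB.succ
      | impG hα hβ => exact IsS.mkImp (ihα.1 hα) (ihβ.2 hβ)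
  | iff α β ihα ihβ =>
    refine ⟨fun h => ?_, fun h => ?_⟩
    · cases h with | ofB hB => exact IsG.ofB hB.succ
    · cases h with | ofB hB => exact IsS.ofB hB.succ
  | xor α β ihα ihβ =>
    refine ⟨fun h => ?_, fun h => ?_⟩
    · cases h with | ofB hB => exact IsG.ofB hB.succ
    · cases h with | ofB hB => exact IsS.ofB hB.succ
  | next φ ih =>
    constructor <;> intro h
    · cases h with
      | ofB hB => exact IsG.ofB hB.succ
      | next hφ => exact hφ
    · cases h with
      | ofB hB => exact IsS.ofB hB.succ
      | next hφ => exact hφ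
  | until_ α β ihα ihβ =>
    constructor <;> intro h
    · cases h with
      | ofB hB => cases hB
      | until_ hα hβ =>
        exact IsG.mkOr (ihβ.1 hβ) (IsG.mkAnd (ihα.1 hα) (IsG.until_ hα hβ))
    · cases h with
      | ofB hB => cases hB
  | wuntil α β ihα ihβ =>
    constructor <;> intro h
    · cases h with
      | ofB hB => cases hB
    · cases h with
      | ofB hB => cases hB
      | wuntil hα hβ =>
        exact IsS.mkOr (ihβ.2 hβ) (IsS.mkAnd (ihα.2 hα) (IsS.wuntil hα hβ))
  | muntil α β ihα ihβ =>
    constructor <;> intro h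
    · cases h with
      | ofB hB => cases hB
      | muntil hα hβ =>
        exact IsG.mkAnd (ihβ.1 hβ) (IsG.mkOr (ihα.1 hα) (IsG.muntil hα hβ))
    · cases h with
      | ofB hB => cases hB
  | release α β ihα ihβ =>
    constructor <;> intro h
    · cases h with
      | ofB hB => cases hB
    · cases h with
      | ofB hB => cases hB
      | release hα hβ =>
        exact IsS.mkAnd (ihβ.2 hβ) (IsS.mkOr (ihα.2 hα) (IsS.release hα hβ))
  | ev φ ih =>
    constructor <;> intro h
    · cases h with
      | ofB hB => cases hB
      | ev hφ => exact IsG.mkOr (ih.1 hφ) (IsG.ev hφ)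
    · cases h with
      | ofB hB => cases hB
  | always φ ih =>
    constructor <;> intro h
    · cases h with
      | ofB hB => cases hB
    · cases h with
      | ofB hB => cases hB
      | always hφ => exact IsS.mkAnd (ih.2 hφ) (IsS.always hφ)

/-! ### Preservation of `NoConst` -/

lemma noConst_mkNot {a : LTL P} (ha : NoConst a) : NoConst (mkNot a) := by
  rcases mkNot_cases a with h | h | ⟨hc, h⟩ <;> rw [h] <;> trivial

lemma noConst_mkAnd {a b : LTL P} (ha : NoConst a) (hb : NoConst b) : NoConst (mkAnd a b) := by
  rcases mkAnd_cases a b with h | h | h | ⟨hca, hcb, h⟩ <;> rw [h] <;> trivial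

lemma noConst_mkOr {a b : LTL P} (ha : NoConst a) (hb : NoConst b) : NoConst (mkOr a b) := by
  rcases mkOr_cases a b with h | h | h | ⟨hca, hcb, h⟩ <;> rw [h] <;> trivial

lemma noConst_mkImp {a b : LTL P} (ha : NoConst a) (hb : NoConst b) : NoConst (mkImp a b) := by
  rcases mkImp_cases a b with h | h | ⟨hca, h⟩ | ⟨hca, hcb, h⟩ <;> rw [h] <;> trivial

lemma noConst_mkIff {a b : LTL P} (ha : NoConst a) (hb : NoConst b) : NoConst (mkIff a b) := by
  rcases mkIff_cases a b with h | h | h | h | ⟨hca, h⟩ | ⟨hcb, h⟩ | ⟨hca, hcb, h⟩ <;> rw [h] <;> trivial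

lemma noConst_mkXor {a b : LTL P} (ha : NoConst a) (hb : NoConst b) : NoConst (mkXor a b) := by
  rcases mkXor_cases a b with h | h | h | h | ⟨hca, h⟩ | ⟨hcb, h⟩ | ⟨hca, hcb, h⟩ <;> rw [h] <;> trivial

lemma noConst_succ (v : P → Bool) : ∀ φ : LTL P, NoConst φ → NoConst (succ v φ) := by
  intro φ
  induction φ with
  | tt => exact fun h => h
  | ff => exact fun h => h
  | atom p => intro _; by_cases h : v p <;> simp [LTL.succ, h, NoConst]
  | not φ ih => exact fun h => noConst_mkNot (ih h.2)
  | and α β ihα ihβ => exact fun h => noConst_mkAnd (ihα h.1.2) (ihβ h.2.2)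
  | or α β ihα ihβ => exact fun h => noConst_mkOr (ihα h.1.2) (ihβ h.2.2)
  | imp α β ihα ihβ => exact fun h => noConst_mkImp (ihα h.1.2) (ihβ h.2.2)
  | iff α β ihα ihβ => exact fun h => noConst_mkIff (ihα h.1.2) (ihβ h.2.2)
  | xor α β ihα ihβ => exact fun h => noConst_mkXor (ihα h.1.2) (ihβ h.2.2)
  | next φ ih => exact fun h => h.2
  | until_ α β ihα ihβ =>
    exact fun h => noConst_mkOr (ihβ h.2.2) (noConst_mkAnd (ihα h.1.2) h)
  | wuntil α β ihα ihβ =>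
    exact fun h => noConst_mkOr (ihβ h.2.2) (noConst_mkAnd (ihα h.1.2) h)
  | muntil α β ihα ihβ =>
    exact fun h => noConst_mkAnd (ihβ h.2.2) (noConst_mkOr (ihα h.1.2) h)
  | release α β ihα ihβ =>
    exact fun h => noConst_mkAnd (ihβ h.2.2) (noConst_mkOr (ihα h.1.2) h)
  | ev φ ih => exact fun h => noConst_mkOr (ih h.2) h
  | always φ ih => exact fun h => noConst_mkAnd (ih h.2) h

end LTL
namespace LTL
variable {P : Type}

/-! ### The acceptance value of nonconstant `IsB` formulas is the wildcard -/

lemma lam_of_B : ∀ {φ : LTL P}, IsB φ → NoConst φ → ¬ IsConst φ → lam φ = none := by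
  intro φ h
  induction h with
  | tt => intro _ hc; exact absurd trivial hc
  | ff => intro _ hc; exact absurd trivial hc
  | atom p => intro _ _; rfl
  | not hφ ih =>
    intro hNC _
    obtain ⟨hcφ, hnφ⟩ := hNC
    simp only [lam, ih hnφ hcφ]; rfl
  | and hα hβ ihα ihβ =>
    intro hNC _
    obtain ⟨⟨hcα, hnα⟩, hcβ, hnβ⟩ := hNC
    simp only [lam, ihα hnα hcα, ihβ hnβ hcβ]; rfl
  | or hα hβ ihα ihβ =>
    intro hNC _
    obtain ⟨⟨hcα, hnα⟩, hcβ, hnβ⟩ := hNC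
    simp only [lam, ihα hnα hcα, ihβ hnβ hcβ]; rfl
  | imp hα hβ ihα ihβ =>
    intro hNC _
    obtain ⟨⟨hcα, hnα⟩, hcβ, hnβ⟩ := hNC
    simp only [lam, ihα hnα hcα, ihβ hnβ hcβ]; rfl
  | iff hα hβ ihα ihβ =>
    intro hNC _
    obtain ⟨⟨hcα, hnα⟩, hcβ, hnβ⟩ := hNC
    simp only [lam, ihα hnα hcα, ihβ hnβ hcβ]; rfl
  | xor hα hβ ihα ihβ =>
    intro hNC _
    obtain ⟨⟨hcα, hnα⟩, hcβ, hnβ⟩ := hNC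
    simp only [lam, ihα hnα hcα, ihβ hnβ hcβ]; rfl
  | next hφ ih =>
    intro hNC _
    obtain ⟨hcφ, hnφ⟩ := hNC
    simp only [lam, ih hnφ hcφ]

/-! ### Classification of the acceptance value on the guarantee/safety grammars -/

lemma lam_GS : ∀ φ : LTL P, NoConst φ → ¬ IsConst φ →
    (IsG φ → (IsB φ ∧ lam φ = none) ∨ lam φ = some false) ∧
    (IsS φ → (IsB φ ∧ lam φ = none) ∨ lam φ = some true) := by
  intro φ
  induction φ with
  | tt => intro _ hc; exact absurd trivial hc
  | ff => intro _ hc; exact absurd trivial hc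
  | atom p => exact fun _ _ => ⟨fun _ => Or.inl ⟨IsB.atom p, rfl⟩,
      fun _ => Or.inl ⟨IsB.atom p, rfl⟩⟩
  | not ψ ih =>
    intro hNC hc
    obtain ⟨hcψ, hnψ⟩ := hNC
    have I := ih hnψ hcψ
    constructor <;> intro h
    · cases h with
      | ofB hB => exact Or.inl ⟨hB, lam_of_B hB ⟨hcψ, hnψ⟩ hc⟩
      | notS hS =>
        rcases I.2 hS with ⟨hBψ, hn⟩ | hn
        · exact Or.inl ⟨IsB.not hBψ, by simp only [lam, hn]; rfl⟩
        · exact Or.inr (by simp only [lam, hn]; rfl)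
    · cases h with
      | ofB hB => exact Or.inl ⟨hB, lam_of_B hB ⟨hcψ, hnψ⟩ hc⟩
      | notG hG =>
        rcases I.1 hG with ⟨hBψ, hn⟩ | hn
        · exact Or.inl ⟨IsB.not hBψ, by simp only [lam, hn]; rfl⟩
        · exact Or.inr (by simp only [lam, hn]; rfl)
  | and α β ihα ihβ =>
    intro hNC hc
    obtain ⟨⟨hcα, hnα⟩, hcβ, hnβ⟩ := hNC
    have Iα := ihα hnα hcα
    have Iβ := ihβ hnβ hcβ
    constructor <;> intro h
    · cases h with
      | ofB hB => exact Or.inl ⟨hB, lam_of_B hB ⟨⟨hcα, hnα⟩, hcβ, hnβ⟩ hc⟩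
      | and hα hβ =>
        rcases Iα.1 hα with ⟨hBα, h1⟩ | h1 <;> rcases Iβ.1 hβ with ⟨hBβ, h2⟩ | h2
        · exact Or.inl ⟨IsB.and hBα hBβ, by simp only [lam, h1, h2]; rfl⟩
        all_goals exact Or.inr (by simp only [lam, h1, h2]; rfl)
    · cases h with
      | ofB hB => exact Or.inl ⟨hB, lam_of_B hB ⟨⟨hcα, hnα⟩, hcβ, hnβ⟩ hc⟩
      | and hα hβ =>
        rcases Iα.2 hα with ⟨hBα, h1⟩ | h1 <;> rcases Iβ.2 hβ with ⟨hBβ, h2⟩ | h2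
        · exact Or.inl ⟨IsB.and hBα hBβ, by simp only [lam, h1, h2]; rfl⟩
        all_goals exact Or.inr (by simp only [lam, h1, h2]; rfl)
  | or α β ihα ihβ =>
    intro hNC hc
    obtain ⟨⟨hcα, hnα⟩, hcβ, hnβ⟩ := hNC
    have Iα := ihα hnα hcα
    have Iβ := ihβ hnβ hcβ
    constructor <;> intro h
    · cases h with
      | ofB hB => exact Or.inl ⟨hB, lam_of_B hB ⟨⟨hcα, hnα⟩, hcβ, hnβ⟩ hc⟩
      | or hα hβ =>
        rcases Iα.1 hα with ⟨hBα, h1⟩ | h1 <;> rcases Iβ.1 hβ with ⟨hBβ, h2⟩ | h2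
        · exact Or.inl ⟨IsB.or hBα hBβ, by simp only [lam, h1, h2]; rfl⟩
        all_goals exact Or.inr (by simp only [lam, h1, h2]; rfl)
    · cases h with
      | ofB hB => exact Or.inl ⟨hB, lam_of_B hB ⟨⟨hcα, hnα⟩, hcβ, hnβ⟩ hc⟩
      | or hα hβ =>
        rcases Iα.2 hα with ⟨hBα, h1⟩ | h1 <;> rcases Iβ.2 hβ with ⟨hBβ, h2⟩ | h2
        · exact Or.inl ⟨IsB.or hBα hBβ, by simp only [lam, h1, h2]; rfl⟩
        all_goals exact Or.inr (by simp only [lam, h1, h2]; rfl)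
  | imp α β ihα ihβ =>
    intro hNC hc
    obtain ⟨⟨hcα, hnα⟩, hcβ, hnβ⟩ := hNC
    have Iα := ihα hnα hcα
    have Iβ := ihβ hnβ hcβ
    constructor <;> intro h
    · cases h with
      | ofB hB => exact Or.inl ⟨hB, lam_of_B hB ⟨⟨hcα, hnα⟩, hcβ, hnβ⟩ hc⟩
      | impS hα hβ =>
        rcases Iα.2 hα with ⟨hBα, h1⟩ | h1 <;> rcases Iβ.1 hβ with ⟨hBβ, h2⟩ | h2
        · exact Or.inl ⟨IsB.imp hBα hBβ, by simp only [lam, h1, h2]; rfl⟩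
        all_goals exact Or.inr (by simp only [lam, h1, h2]; rfl)
    · cases h with
      | ofB hB => exact Or.inl ⟨hB, lam_of_B hB ⟨⟨hcα, hnα⟩, hcβ, hnβ⟩ hc⟩
      | impG hα hβ =>
        rcases Iα.1 hα with ⟨hBα, h1⟩ | h1 <;> rcases Iβ.2 hβ with ⟨hBβ, h2⟩ | h2
        · exact Or.inl ⟨IsB.imp hBα hBβ, by simp only [lam, h1, h2]; rfl⟩
        all_goals exact Or.inr (by simp only [lam, h1, h2]; rfl)
  | iff α β ihα ihβ =>
    intro hNC hc
    refine ⟨fun h => ?_, fun h => ?_⟩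
    · cases h with | ofB hB => exact Or.inl ⟨hB, lam_of_B hB hNC hc⟩
    · cases h with | ofB hB => exact Or.inl ⟨hB, lam_of_B hB hNC hc⟩
  | xor α β ihα ihβ =>
    intro hNC hc
    refine ⟨fun h => ?_, fun h => ?_⟩
    · cases h with | ofB hB => exact Or.inl ⟨hB, lam_of_B hB hNC hc⟩
    · cases h with | ofB hB => exact Or.inl ⟨hB, lam_of_B hB hNC hc⟩
  | next ψ ih =>
    intro hNC hc
    obtain ⟨hcψ, hnψ⟩ := hNC
    have I := ih hnψ hcψ
    constructor <;> intro h
    · cases h with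
      | ofB hB => exact Or.inl ⟨hB, lam_of_B hB ⟨hcψ, hnψ⟩ hc⟩
      | next hφ =>
        rcases I.1 hφ with ⟨hBψ, hn⟩ | hn
        · exact Or.inl ⟨IsB.next hBψ, by simp only [lam, hn]⟩
        · exact Or.inr (by simp only [lam, hn])
    · cases h with
      | ofB hB => exact Or.inl ⟨hB, lam_of_B hB ⟨hcψ, hnψ⟩ hc⟩
      | next hφ =>
        rcases I.2 hφ with ⟨hBψ, hn⟩ | hn
        · exact Or.inl ⟨IsB.next hBψ, by simp only [lam, hn]⟩
        · exact Or.inr (by simp only [lam, hn])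
  | until_ α β ihα ihβ =>
    intro _ _
    refine ⟨fun _ => Or.inr rfl, fun h => ?_⟩
    cases h with | ofB hB => cases hB
  | wuntil α β ihα ihβ =>
    intro _ _
    refine ⟨fun h => ?_, fun _ => Or.inr rfl⟩
    cases h with | ofB hB => cases hB
  | muntil α β ihα ihβ =>
    intro _ _
    refine ⟨fun _ => Or.inr rfl, fun h => ?_⟩
    cases h with | ofB hB => cases hB
  | release α β ihα ihβ =>
    intro _ _
    refine ⟨fun h => ?_, fun _ => Or.inr rfl⟩
    cases h with | ofB hB => cases hB
  | ev ψ ih =>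
    intro _ _
    refine ⟨fun _ => Or.inr rfl, fun h => ?_⟩
    cases h with | ofB hB => cases hB
  | always ψ ih =>
    intro _ _
    refine ⟨fun h => ?_, fun _ => Or.inr rfl⟩
    cases h with | ofB hB => cases hB

end LTL
namespace LTL
variable {P : Type}

/-! ### Shadowing a path of the quotient automaton by iterated unfoldings -/

lemma shadow_step {rep : LTL P → LTL P} (h1 : ∀ α, PropEquiv (rep α) α)
    {α β χ : LTL P} (hst : StepRep rep α β) (he : PropEquiv χ α) :
    ∃ v : P → Bool, PropEquiv (succ v χ) β := by
  obtain ⟨v, hv⟩ := hst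
  refine ⟨v, (he.succ_congr v).trans' ?_⟩
  rw [← hv]
  exact (h1 _).symm'

lemma shadow_rt {rep : LTL P → LTL P} (h1 : ∀ α, PropEquiv (rep α) α)
    {α β : LTL P} (h : Relation.ReflTransGen (StepRep rep) α β) :
    ∀ χ : LTL P, IsB χ → PropEquiv χ α →
      ∃ χ' : LTL P, IsB χ' ∧ PropEquiv χ' β ∧
        (χ' = χ ∨ IsConst χ' ∨ xdepth χ' < xdepth χ) := by
  induction h with
  | refl => exact fun χ hB he => ⟨χ, hB, he, Or.inl rfl⟩
  | tail hrt hstep ih =>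
    intro χ hB he
    obtain ⟨χ', hB', he', hp⟩ := ih χ hB he
    obtain ⟨v, hv⟩ := shadow_step h1 hstep he'
    refine ⟨succ v χ', hB'.succ, hv, ?_⟩
    rcases hp with rfl | hc | hd
    · rcases succ_depth v hB' with h | h
      · exact Or.inr (Or.inl h)
      · exact Or.inr (Or.inr h)
    · rw [succ_of_const hc]
      exact Or.inr (Or.inl hc)
    · rcases succ_depth v hB' with h | h
      · exact Or.inr (Or.inl h)
      · exact Or.inr (Or.inr (h.trans hd))

lemma shadow_tg {rep : LTL P → LTL P} (h1 : ∀ α, PropEquiv (rep α) α)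
    {α β : LTL P} (h : Relation.TransGen (StepRep rep) α β)
    {χ : LTL P} (hB : IsB χ) (he : PropEquiv χ α) :
    ∃ χ' : LTL P, IsB χ' ∧ PropEquiv χ' β ∧ (IsConst χ' ∨ xdepth χ' < xdepth χ) := by
  obtain ⟨b, hab, hbc⟩ := (Relation.TransGen.head'_iff).mp h
  obtain ⟨v, hv⟩ := shadow_step h1 hab he
  have hd1 := succ_depth v hB
  obtain ⟨χ', hB', he', hp⟩ := shadow_rt h1 hbc (succ v χ) hB.succ hv
  rcases hd1 with hc1 | hd1
  · rcases hp with rfl | hc | hd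
    · exact ⟨_, hB', he', Or.inl hc1⟩
    · exact ⟨χ', hB', he', Or.inl hc⟩
    · refine ⟨χ', hB', he', Or.inl ?_⟩
      rcases isConst_iff.mp hc1 with h | h <;> rw [h] at hd <;>
        exact absurd hd (by simp [xdepth])
  · rcases hp with rfl | hc | hd
    · exact ⟨_, hB', he', Or.inr hd1⟩
    · exact ⟨χ', hB', he', Or.inl hc⟩
    · exact ⟨χ', hB', he', Or.inr (hd.trans hd1)⟩

lemma shadow_loop {rep : LTL P → LTL P} (h1 : ∀ α, PropEquiv (rep α) α)
    {φ : LTL P} (cyc : Relation.TransGen (StepRep rep) φ φ) :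
    ∀ (d : ℕ) (χ : LTL P), IsB χ → PropEquiv χ φ → xdepth χ ≤ d →
      ∃ χ' : LTL P, IsConst χ' ∧ PropEquiv χ' φ := by
  intro d
  induction d with
  | zero =>
    intro χ hB he hd
    obtain ⟨χ', _, he', hp⟩ := shadow_tg h1 cyc hB he
    rcases hp with hc | hlt
    · exact ⟨χ', hc, he'⟩
    · omega
  | succ d ih =>
    intro χ hB he hd
    obtain ⟨χ', hB', he', hp⟩ := shadow_tg h1 cyc hB he
    rcases hp with hc | hlt
    · exact ⟨χ', hc, he'⟩
    · exact ih χ' hB' he' (by omega)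

/-- A nonconstant purely-Boolean state cannot lie on a cycle. -/
lemma loop_const {rep : LTL P → LTL P} {ι φ : LTL P} (hgr : GoodRep rep ι)
    (cyc : Relation.TransGen (StepRep rep) φ φ) (hB : IsB φ) :
    φ = .tt ∨ φ = .ff := by
  obtain ⟨h1, h2, h3, h4, _⟩ := hgr
  obtain ⟨c, hc, hce⟩ := shadow_loop h1 cyc (xdepth φ) φ hB (PropEquiv.refl φ) le_rfl
  obtain ⟨b, _, hstep⟩ := (Relation.TransGen.tail'_iff).mp cyc
  obtain ⟨v, hv⟩ := hstep
  have hx : PropEquiv (succ v b) c := by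
    have hxφ : PropEquiv (succ v b) φ := by
      rw [← hv]; exact (h1 _).symm'
    exact hxφ.trans' hce.symm'
  rcases isConst_iff.mp hc with rfl | rfl
  · left; rw [← hv, h2 _ _ hx, h3]
  · right; rw [← hv, h2 _ _ hx, h4]

/-! ### Structure of reachable states -/

lemma raw_pres {ι φ : LTL P} (h : Relation.ReflTransGen StepRaw ι φ) :
    (IsG ι → IsG φ) ∧ (IsS ι → IsS φ) ∧ (NoConst ι → NoConst φ) := by
  induction h with
  | refl => exact ⟨id, id, id⟩
  | tail hrt hstep ih =>
    obtain ⟨v, rfl⟩ := hstep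
    exact ⟨fun h => (succ_GS v _).1 (ih.1 h), fun h => (succ_GS v _).2 (ih.2.1 h),
      fun h => noConst_succ v _ (ih.2.2 h)⟩

end LTL

/-- for a syntactic guarantee `ι`, every state `φ ≠ tt` of `D_ι`
that belongs to a non-trivial SCC satisfies `λ(φ) = ⊥`; dually, for a
syntactic safety `ι`, every state `φ ≠ ff` of `D_ι` in a non-trivial SCC
satisfies `λ(φ) = ⊤`. -/
theorem stmt3 {P : Type} :
    (∀ (rep : LTL P → LTL P) (ι : LTL P), LTL.GoodRep rep ι →
      LTL.IsG ι → LTL.NoConst ι →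
      ∀ φ : LTL P, Relation.ReflTransGen (LTL.StepRep rep) ι φ →
        Relation.TransGen (LTL.StepRep rep) φ φ →
        φ ≠ LTL.tt → LTL.lam φ = some false) ∧
    (∀ (rep : LTL P → LTL P) (ι : LTL P), LTL.GoodRep rep ι →
      LTL.IsS ι → LTL.NoConst ι →
      ∀ φ : LTL P, Relation.ReflTransGen (LTL.StepRep rep) ι φ →
        Relation.TransGen (LTL.StepRep rep) φ φ →
        φ ≠ LTL.ff → LTL.lam φ = some true) := by
  constructor
  · intro rep ι hgr hG hNC φ reach cyc hne
    by_cases hff : φ = LTL.ff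
    · subst hff; rfl
    have hcφ : ¬ LTL.IsConst φ := fun hc => by
      rcases LTL.isConst_iff.mp hc with h | h
      exacts [hne h, hff h]
    obtain ⟨h1, h2, h3, h4, h5⟩ := hgr
    have hGφ : LTL.IsG φ ∧ LTL.NoConst φ := by
      rcases h5 φ reach with rfl | h | h | h
      · exact ⟨hG, hNC⟩
      · exact absurd h hne
      · exact absurd h hff
      · exact ⟨(LTL.raw_pres h).1 hG, (LTL.raw_pres h).2.2 hNC⟩
    rcases (LTL.lam_GS φ hGφ.2 hcφ).1 hGφ.1 with ⟨hB, _⟩ | h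
    · rcases LTL.loop_const ⟨h1, h2, h3, h4, h5⟩ cyc hB with h | h
      · exact absurd h hne
      · exact absurd h hff
    · exact h
  · intro rep ι hgr hS hNC φ reach cyc hne
    by_cases htt : φ = LTL.tt
    · subst htt; rfl
    have hcφ : ¬ LTL.IsConst φ := fun hc => by
      rcases LTL.isConst_iff.mp hc with h | h
      exacts [htt h, hne h]
    obtain ⟨h1, h2, h3, h4, h5⟩ := hgr
    have hSφ : LTL.IsS φ ∧ LTL.NoConst φ := by
      rcases h5 φ reach with rfl | h | h | h
      · exact ⟨hS, hNC⟩
      · exact absurd h htt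
      · exact absurd h hne
      · exact ⟨(LTL.raw_pres h).2.1 hS, (LTL.raw_pres h).2.2 hNC⟩
    rcases (LTL.lam_GS φ hSφ.2 hcφ).2 hSφ.1 with ⟨hB, _⟩ | h
    · rcases LTL.loop_const ⟨h1, h2, h3, h4, h5⟩ cyc hB with h | h
      · exact absurd h htt
      · exact absurd h hne
    · exact h
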